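/- Let (Ω, 𝓕, P) be a probability space with a filtration {𝓕_n}_{n≥1} and let {U_n}_{n≥1} be a sequence of square-integrable real random variables adapted to {𝓕_n} with E(U_n) = 0 for all n. Suppose {U_n} is *-submixing with respect to {𝓕_n}, i.e., there exist N ∈ ℕ and a function f on the integers n ≥ N with f(n) ≥ 0 and f(n) → 0 as n → ∞, such that for all n ≥ N and all m ≥ 1, |E(U_{n+m} | 𝓕_m) − E(U_{n+m})| ≤ f(n)·E|U_{n+m}| almost surely. Let {b_n}_{n≥1} be a sequence of positive real numbers increasing to ∞ such that Σ_{n=1}^∞ b_n^{−2}·E(U_n²) < ∞ and sup_n b_n^{−1}·Σ_{i=1}^n E|U_i| < ∞. Then b_n^{−1}·Σ_{i=1}^n U_i → 0 almost surely as n → ∞. -/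

import Mathlib

open MeasureTheory Filter Finset
open scoped Topology ENNReal NNReal

section Aux

lemma kronecker_aux {b : ℕ → ℝ} (hbpos : ∀ n, 0 < b n) (hbmono : Monotone b)
    (hbtop : Tendsto b atTop atTop) {x : ℕ → ℝ} {l : ℝ}
    (hconv : Tendsto (fun n => ∑ i ∈ Finset.range (n+1), x i / b i) atTop (𝓝 l)) :
    Tendsto (fun n => (b n)⁻¹ * ∑ i ∈ Finset.range (n+1), x i) atTop (𝓝 0) := by
  set s : ℕ → ℝ := fun n => ∑ i ∈ Finset.range (n+1), x i / b i with hs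
  have habel : ∀ n, ∑ i ∈ Finset.range (n+1), x i
      = b n * s n - ∑ i ∈ Finset.range n, (b (i+1) - b i) * s i := by
    intro n
    induction n with
    | zero =>
      simp only [hs, Finset.sum_range_one, Finset.range_zero, Finset.sum_empty, sub_zero]
      rw [Finset.sum_range_one, Finset.sum_range_one, mul_comm]
      exact (div_mul_cancel₀ _ (hbpos 0).ne').symm
    | succ n ih =>
      rw [Finset.sum_range_succ, ih, Finset.sum_range_succ]
      have hx : x (n+1) = b (n+1) * (s (n+1) - s n) := by
        have : s (n+1) = s n + x (n+1) / b (n+1) := by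
          simp [hs, Finset.sum_range_succ]
        rw [this]
        rw [add_sub_cancel_left, mul_comm]
        exact (div_mul_cancel₀ _ (hbpos (n+1)).ne').symm
      rw [hx]; ring
  -- weighted sums
  have hw : ∀ i, (0:ℝ) ≤ b (i+1) - b i := fun i => sub_nonneg.2 (hbmono (Nat.le_succ i))
  have hlo : (fun i => (b (i+1) - b i) * (s i - l)) =o[atTop] (fun i => b (i+1) - b i) := by
    rw [Asymptotics.isLittleO_iff]
    intro ε hε
    obtain ⟨N, hN⟩ := Metric.tendsto_atTop.1 hconv ε hε
    filter_upwards [eventually_ge_atTop N] with i hi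
    have : |s i - l| ≤ ε := le_of_lt (by simpa [Real.dist_eq] using hN i hi)
    calc ‖(b (i+1) - b i) * (s i - l)‖ = (b (i+1) - b i) * |s i - l| := by
          rw [norm_mul, Real.norm_of_nonneg (hw i), Real.norm_eq_abs]
      _ ≤ (b (i+1) - b i) * ε := by
          exact mul_le_mul_of_nonneg_left this (hw i)
      _ = ε * ‖b (i+1) - b i‖ := by rw [Real.norm_of_nonneg (hw i)]; ring
  have hsumw : ∀ n, ∑ i ∈ Finset.range n, (b (i+1) - b i) = b n - b 0 :=
    fun n => Finset.sum_range_sub b n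
  have hwtop : Tendsto (fun n => ∑ i ∈ Finset.range n, (b (i+1) - b i)) atTop atTop := by
    simp only [hsumw]
    exact (tendsto_atTop_add_const_right _ (-(b 0)) hbtop).congr (by intro n; ring)
  have hbig := hlo.sum_range hw hwtop
  -- sum of littles is little-o of (b n - b 0), which is O(b n)
  have hOb : (fun n => ∑ i ∈ Finset.range n, (b (i+1) - b i) * (s i - l)) =o[atTop] b := by
    refine hbig.trans_isBigO ?_
    refine Asymptotics.isBigO_of_le _ (fun n => ?_)
    rw [hsumw, Real.norm_of_nonneg (sub_nonneg.2 (hbmono (Nat.zero_le n)))]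
    rw [Real.norm_of_nonneg (hbpos n).le]
    linarith [hbpos 0]
  have h1 : Tendsto (fun n => (∑ i ∈ Finset.range n, (b (i+1) - b i) * (s i - l)) / b n)
      atTop (𝓝 0) := hOb.tendsto_div_nhds_zero
  have hbinv : Tendsto (fun n => (b n)⁻¹) atTop (𝓝 0) := hbtop.inv_tendsto_atTop
  -- combine
  have key : ∀ n, (b n)⁻¹ * ∑ i ∈ Finset.range (n+1), x i
      = (s n - l) - (∑ i ∈ Finset.range n, (b (i+1) - b i) * (s i - l)) / b n
        + (b 0 * l) * (b n)⁻¹ := by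
    intro n
    have hbn := (hbpos n).ne'
    rw [habel n]
    have expand : ∑ i ∈ Finset.range n, (b (i+1) - b i) * s i
        = (∑ i ∈ Finset.range n, (b (i+1) - b i) * (s i - l)) + (b n - b 0) * l := by
      rw [← hsumw n, Finset.sum_mul, ← Finset.sum_add_distrib]
      exact Finset.sum_congr rfl (fun i _ => by ring)
    rw [expand]
    field_simp
    ring
  have : Tendsto (fun n => (s n - l) - (∑ i ∈ Finset.range n, (b (i+1) - b i) * (s i - l)) / b n
        + (b 0 * l) * (b n)⁻¹) atTop (𝓝 ((l - l) - 0 + (b 0 * l) * 0)) := by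
    exact (((hconv.sub_const l).sub h1).add ((tendsto_const_nhds).mul hbinv))
  simp only [sub_self, zero_sub, mul_zero, sub_zero, add_zero, neg_zero] at this
  exact (tendsto_congr key).2 this

lemma mds_ae_converges {Ω : Type*} {m0 : MeasurableSpace Ω} {μ : Measure Ω}
    [IsProbabilityMeasure μ]
    (𝓖 : Filtration ℕ m0) (g : ℕ → Ω → ℝ)
    (hadp : ∀ j, StronglyMeasurable[𝓖 j] (g j))
    (hL2 : ∀ j, MemLp (g j) 2 μ)
    (hmds : ∀ j, μ[g (j+1) | 𝓖 j] =ᵐ[μ] 0)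
    (C : ℝ) (hsum : ∀ J, ∑ j ∈ Finset.range (J+1), ∫ ω, (g j ω)^2 ∂μ ≤ C) :
    ∀ᵐ ω ∂μ, ∃ c, Tendsto (fun J => ∑ j ∈ Finset.range (J+1), g j ω) atTop (𝓝 c) := by
  have hint : ∀ j, Integrable (g j) μ := fun j => (hL2 j).integrable one_le_two
  set M : ℕ → Ω → ℝ := fun J ω => ∑ j ∈ Finset.range (J+1), g j ω with hM
  have hMsucc : ∀ J, M (J+1) = M J + g (J+1) := by
    intro J; funext ω; simp [hM, Finset.sum_range_succ]
  have hMadp : StronglyAdapted 𝓖 M := by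
    intro J
    apply Finset.stronglyMeasurable_fun_sum
    intro j hj
    exact (hadp j).mono (𝓖.mono (Nat.lt_succ_iff.1 (Finset.mem_range.1 hj)))
  have hM2 : ∀ J, MemLp (M J) 2 μ := by
    intro J
    have h := memLp_finset_sum' (Finset.range (J+1)) (fun j _ => hL2 j)
    have : M J = (∑ j ∈ Finset.range (J+1), g j) := by
      funext ω; simp [hM]
    rw [this]; exact h
  have hMint : ∀ J, Integrable (M J) μ := fun J => (hM2 J).integrable one_le_two
  have hmart : Martingale M 𝓖 μ := by
    refine martingale_nat hMadp hMint (fun J => ?_)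
    rw [hMsucc J]
    have h1 : μ[M J + g (J+1)|𝓖 J] =ᵐ[μ] μ[M J|𝓖 J] + μ[g (J+1)|𝓖 J] :=
      condExp_add (hMint J) (hint (J+1)) _
    have h2 : μ[M J|𝓖 J] = M J :=
      condExp_of_stronglyMeasurable (𝓖.le J) (hMadp J) (hMint J)
    filter_upwards [h1, hmds J] with ω hω h0
    simp [hω, h2, h0]
  -- integrability of products
  have hint_mul : ∀ J, Integrable (fun ω => M J ω * g (J + 1) ω) μ := by
    intro J
    have := ((hL2 (J+1)).smul (hM2 J)
      (p := 2) (q := 2) (r := 1))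
    rw [memLp_one_iff_integrable] at this
    exact this
  -- cross terms vanish
  have hcross : ∀ J, ∫ ω, M J ω * g (J + 1) ω ∂μ = 0 := by
    intro J
    have hpull : μ[(M J) * (g (J+1))|𝓖 J] =ᵐ[μ] (M J) * μ[g (J+1)|𝓖 J] :=
      condExp_mul_of_stronglyMeasurable_left (hMadp J) (hint_mul J) (hint (J+1))
    have : ∫ ω, M J ω * g (J + 1) ω ∂μ = ∫ ω, (μ[(M J) * (g (J+1))|𝓖 J]) ω ∂μ :=
      (integral_condExp (𝓖.le J)).symm
    rw [this, integral_congr_ae hpull]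
    have : ((M J) * μ[g (J + 1)|𝓖 J] : Ω → ℝ) =ᵐ[μ] 0 := by
      filter_upwards [hmds J] with ω h0
      simp [Pi.mul_apply, h0]
    rw [integral_congr_ae this]
    simp
  -- orthogonality
  have orth : ∀ J, ∫ ω, (M J ω)^2 ∂μ = ∑ j ∈ Finset.range (J+1), ∫ ω, (g j ω)^2 ∂μ := by
    intro J
    induction J with
    | zero => simp [hM, Finset.sum_range_one]
    | succ J ih =>
      rw [Finset.sum_range_succ, ← ih]
      have e : ∀ ω, (M (J+1) ω)^2
          = (M J ω)^2 + (2*(M J ω * g (J+1) ω) + (g (J+1) ω)^2) := by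
        intro ω; rw [hMsucc J]; simp only [Pi.add_apply]; ring
      have h2int : Integrable (fun ω => 2 * (M J ω * g (J + 1) ω) + g (J+1) ω ^ 2) μ :=
        ((hint_mul J).const_mul 2).add (hL2 (J+1)).integrable_sq
      have e2 : (fun ω => M (J+1) ω ^ 2)
          = fun ω => M J ω ^ 2 + (2 * (M J ω * g (J + 1) ω) + g (J+1) ω ^ 2) := funext e
      calc ∫ ω, M (J+1) ω ^ 2 ∂μ
          = ∫ ω, (M J ω ^ 2 + (2 * (M J ω * g (J + 1) ω) + g (J+1) ω ^ 2)) ∂μ := by rw [e2]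
        _ = (∫ ω, M J ω ^ 2 ∂μ)
            + ∫ ω, (2 * (M J ω * g (J + 1) ω) + g (J+1) ω ^ 2) ∂μ :=
            integral_add (hM2 J).integrable_sq h2int
        _ = (∫ ω, M J ω ^ 2 ∂μ) + ((∫ ω, 2 * (M J ω * g (J + 1) ω) ∂μ)
            + ∫ ω, g (J+1) ω ^ 2 ∂μ) := by
            rw [integral_add ((hint_mul J).const_mul 2) (hL2 (J+1)).integrable_sq]
        _ = (∫ ω, M J ω ^ 2 ∂μ) + ∫ ω, g (J+1) ω ^ 2 ∂μ := by
            rw [MeasureTheory.integral_const_mul, hcross J]; ring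
  -- L¹ bound
  have habs : ∀ J, ∫ ω, |M J ω| ∂μ ≤ (1 + C)/2 := by
    intro J
    have hle : ∀ ω, |M J ω| ≤ (1 + (M J ω)^2)/2 := by
      intro ω
      nlinarith [sq_nonneg (|M J ω| - 1), sq_abs (M J ω)]
    have h1 : ∫ ω, |M J ω| ∂μ ≤ ∫ ω, (1 + (M J ω)^2)/2 ∂μ := by
      refine integral_mono (hMint J).abs ?_ hle
      exact ((integrable_const 1).add (hM2 J).integrable_sq).div_const 2
    have h2 : ∫ ω, (1 + (M J ω)^2)/2 ∂μ = (1 + ∫ ω, (M J ω)^2 ∂μ)/2 := by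
      rw [integral_div, integral_add (integrable_const 1) (hM2 J).integrable_sq]
      simp [measure_univ]
    have h3 : ∫ ω, (M J ω)^2 ∂μ ≤ C := by rw [orth J]; exact hsum J
    calc ∫ ω, |M J ω| ∂μ ≤ (1 + ∫ ω, (M J ω)^2 ∂μ)/2 := by rw [← h2]; exact h1
      _ ≤ (1 + C)/2 := by linarith
  have hbdd : ∀ J, eLpNorm (M J) 1 μ ≤ (((1 + C)/2).toNNReal : ℝ≥0∞) := by
    intro J
    rw [eLpNorm_one_eq_lintegral_enorm,
      ← ofReal_integral_norm_eq_lintegral_enorm (hMint J)]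
    rw [ENNReal.ofReal, ENNReal.coe_le_coe]
    exact Real.toNNReal_mono (le_trans (le_of_eq (by simp [Real.norm_eq_abs])) (habs J))
  have := hmart.submartingale.exists_ae_tendsto_of_bdd hbdd
  filter_upwards [this] with ω hω
  exact hω

lemma sq_integral_sub_condexp_le {Ω : Type*} {m0 : MeasurableSpace Ω} {μ : Measure Ω}
    [IsProbabilityMeasure μ] {m' : MeasurableSpace Ω} (hm : m' ≤ m0)
    {U : Ω → ℝ} (hU : MemLp U 2 μ) (hc : MemLp (μ[U|m']) 2 μ) :
    ∫ ω, (U ω - (μ[U|m']) ω)^2 ∂μ ≤ ∫ ω, (U ω)^2 ∂μ := by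
  set c : Ω → ℝ := μ[U|m'] with hcdef
  have hUint : Integrable U μ := hU.integrable one_le_two
  have hone : (1 : ℝ≥0∞) / 1 = 1 / 2 + 1 / 2 := by
    simp only [one_div]
    rw [inv_one]
    exact ENNReal.inv_two_add_inv_two.symm
  have hcuInt : Integrable (fun ω => c ω * U ω) μ := by
    have := hU.smul hc (p := 2) (q := 2) (r := 1)
    rw [memLp_one_iff_integrable] at this
    exact this
  have hpull : μ[c * U|m'] =ᵐ[μ] c * μ[U|m'] :=
    condExp_mul_of_stronglyMeasurable_left stronglyMeasurable_condExp hcuInt hUint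
  have hcu : ∫ ω, c ω * U ω ∂μ = ∫ ω, (c ω)^2 ∂μ := by
    have h1 : ∫ ω, c ω * U ω ∂μ = ∫ ω, (μ[c * U|m']) ω ∂μ := (integral_condExp hm).symm
    rw [h1, integral_congr_ae hpull]
    refine integral_congr_ae (Filter.Eventually.of_forall (fun ω => ?_))
    simp [hcdef, sq]
  have expand : (fun ω => (U ω - c ω)^2)
      = fun ω => ((U ω)^2 - 2*(c ω * U ω)) + (c ω)^2 := by
    funext ω; ring
  have h2 : ∫ ω, (U ω - c ω)^2 ∂μ
      = (∫ ω, ((U ω)^2 - 2*(c ω * U ω)) ∂μ) + ∫ ω, (c ω)^2 ∂μ := by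
    rw [expand]
    exact integral_add (hU.integrable_sq.sub (hcuInt.const_mul 2)) hc.integrable_sq
  rw [h2, integral_sub hU.integrable_sq (hcuInt.const_mul 2),
    MeasureTheory.integral_const_mul, hcu]
  have hc2 : 0 ≤ ∫ ω, (c ω)^2 ∂μ := integral_nonneg (fun ω => sq_nonneg _)
  linarith

lemma comb_residue {b : ℕ → ℝ} (hbpos : ∀ n, 0 < b n) (hbmono : Monotone b)
    {k : ℕ} (hk : 1 ≤ k) {D : ℕ → ℝ}
    (h : ∀ r < k, Tendsto
      (fun J => (b (r + J*k))⁻¹ * ∑ j ∈ Finset.range (J+1), D (r + j*k)) atTop (𝓝 0)) :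
    Tendsto (fun n => (b n)⁻¹ * ∑ i ∈ Finset.range (n+1), D i) atTop (𝓝 0) := by
  have hk0 : 0 < k := hk
  have hfiber : ∀ n, (b n)⁻¹ * ∑ i ∈ Finset.range (n+1), D i
      = ∑ r ∈ Finset.range k,
        (b n)⁻¹ * ∑ i ∈ (Finset.range (n+1)).filter (fun i => i % k = r), D i := by
    intro n
    rw [← Finset.mul_sum]
    congr 1
    exact (Finset.sum_fiberwise_of_maps_to (fun i _ => Finset.mem_range.2 (Nat.mod_lt i hk0)) D).symm
  simp only [hfiber]
  have : Tendsto (fun n => ∑ r ∈ Finset.range k,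
      (b n)⁻¹ * ∑ i ∈ (Finset.range (n+1)).filter (fun i => i % k = r), D i)
      atTop (𝓝 (∑ r ∈ Finset.range k, (0:ℝ))) := by
    refine tendsto_finset_sum _ (fun r hr => ?_)
    have hrk : r < k := Finset.mem_range.1 hr
    -- squeeze
    have hdivtop : Tendsto (fun n => (n - r)/k) atTop atTop := by
      refine tendsto_atTop_atTop.2 (fun N => ⟨r + N*k, fun n hn => ?_⟩)
      exact (Nat.le_div_iff_mul_le hk0).2 (by omega)
    have hA : Tendsto (fun n => |(b (r + ((n-r)/k)*k))⁻¹
        * ∑ j ∈ Finset.range ((n-r)/k + 1), D (r + j*k)|) atTop (𝓝 0) := by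
      have := ((h r hrk).abs).comp hdivtop
      simpa [Function.comp_def] using this
    refine squeeze_zero_norm' ?_ hA
    filter_upwards [eventually_ge_atTop k] with n hn
    have hrn : r ≤ n := le_trans (Nat.le_of_lt hrk) hn
    set J := (n - r)/k with hJ
    have hset : (Finset.range (n+1)).filter (fun i => i % k = r)
        = (Finset.range (J+1)).image (fun j => r + j*k) := by
      ext i
      simp only [Finset.mem_filter, Finset.mem_range, Finset.mem_image]
      constructor
      · rintro ⟨hin, hir⟩
        refine ⟨i / k, ?_, ?_⟩
        · have h1 : i % k + k * (i / k) = i := Nat.mod_add_div i k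
          have h1' : r + (i / k) * k = i := by rw [mul_comm]; omega
          have h2 : (i / k) * k ≤ n - r := by omega
          exact Nat.lt_succ_of_le ((Nat.le_div_iff_mul_le hk0).2 h2)
        · have h1 : i % k + k * (i / k) = i := Nat.mod_add_div i k
          rw [mul_comm]; omega
      · rintro ⟨j, hj, rfl⟩
        have h2 : j*k ≤ J*k := Nat.mul_le_mul_right k (Nat.lt_succ_iff.1 hj)
        have h3 : J*k ≤ n - r := Nat.div_mul_le_self _ _
        refine ⟨by omega, ?_⟩
        rw [Nat.add_mul_mod_self_right]
        exact Nat.mod_eq_of_lt hrk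
    have hsumeq : ∑ i ∈ (Finset.range (n+1)).filter (fun i => i % k = r), D i
        = ∑ j ∈ Finset.range (J+1), D (r + j*k) := by
      rw [hset]
      rw [Finset.sum_image]
      intro j1 _ j2 _ he
      have : j1 * k = j2 * k := by simp only at he; omega
      exact Nat.eq_of_mul_eq_mul_right hk0 this
    rw [hsumeq]
    have hle : b (r + J*k) ≤ b n := by
      apply hbmono
      have h3 : J*k ≤ n - r := Nat.div_mul_le_self _ _
      omega
    have hbinv : (b n)⁻¹ ≤ (b (r + J*k))⁻¹ :=
      (inv_le_inv₀ (lt_of_lt_of_le (hbpos _) hle) (hbpos _)).2 hle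
    rw [Real.norm_eq_abs, abs_mul, abs_mul, abs_inv, abs_inv,
      abs_of_pos (hbpos n), abs_of_pos (hbpos (r + J*k))]
    exact mul_le_mul_of_nonneg_right hbinv (abs_nonneg _)
  simpa using this

end Aux

/-- strong law of large numbers for `*`-submixing sequences of centered,
square-integrable random variables (generalization of Hall–Heyde Theorem 2.20). -/
theorem slln_star_submixing {Ω : Type*} {m : MeasurableSpace Ω}
    (μ : Measure Ω) [IsProbabilityMeasure μ]
    (𝓕 : Filtration ℕ m) (U : ℕ → Ω → ℝ)
    (hadapted : Adapted 𝓕 U)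
    (hL2 : ∀ n, MemLp (U n) 2 μ)
    (hmean : ∀ n, ∫ ω, U n ω ∂μ = 0)
    (N0 : ℕ) (f : ℕ → ℝ)
    (hf0 : ∀ n ≥ N0, 0 ≤ f n)
    (hftend : Tendsto f atTop (𝓝 0))
    (hmix : ∀ n ≥ N0, ∀ m' ≥ 1, ∀ᵐ ω ∂μ,
      |(μ[U (n + m') | 𝓕 m']) ω - ∫ x, U (n + m') x ∂μ| ≤
        f n * ∫ x, |U (n + m') x| ∂μ)
    (b : ℕ → ℝ) (hbpos : ∀ n, 0 < b n) (hbmono : Monotone b)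
    (hbtop : Tendsto b atTop atTop)
    (hsum : Summable fun n => (b n)⁻¹ ^ 2 * ∫ ω, (U n ω) ^ 2 ∂μ)
    (hsup : ∃ M : ℝ, ∀ n : ℕ,
      (b n)⁻¹ * ∑ i ∈ Finset.range (n + 1), ∫ ω, |U i ω| ∂μ ≤ M) :
    ∀ᵐ ω ∂μ, Tendsto
      (fun n : ℕ => (b n)⁻¹ * ∑ i ∈ Finset.range (n + 1), U i ω) atTop (𝓝 0) := by
  classical
  obtain ⟨M, hM⟩ := hsup
  have hMnn : 0 ≤ M := by
    refine le_trans ?_ (hM 0)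
    have h1 : 0 ≤ ∫ ω, |U 0 ω| ∂μ := integral_nonneg (fun ω => abs_nonneg _)
    have h2 : 0 < (b 0)⁻¹ := inv_pos.2 (hbpos 0)
    have h3 : 0 ≤ ∑ i ∈ Finset.range (0+1), ∫ ω, |U i ω| ∂μ :=
      Finset.sum_nonneg fun i _ => integral_nonneg (fun ω => abs_nonneg _)
    exact mul_nonneg h2.le h3
  set K0 := max N0 1 with hK0def
  have hUint : ∀ i, Integrable (U i) μ := fun i => (hL2 i).integrable one_le_two
  set Cf : ℕ → ℕ → Ω → ℝ := fun k i => if k < i then μ[U i | 𝓕 (i - k)] else U i with hCf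
  set Df : ℕ → ℕ → Ω → ℝ := fun k i => fun ω => U i ω - Cf k i ω with hDf
  have hCmeas : ∀ k i, StronglyMeasurable[𝓕 i] (Cf k i) := by
    intro k i
    by_cases h : k < i
    · simp only [hCf, if_pos h]
      exact stronglyMeasurable_condExp.mono (𝓕.mono (Nat.sub_le i k))
    · simp only [hCf, if_neg h]
      exact (hadapted i).stronglyMeasurable
  have hCbound : ∀ k, K0 ≤ k → ∀ i, k < i →
      ∀ᵐ ω ∂μ, |Cf k i ω| ≤ f k * ∫ x, |U i x| ∂μ := by
    intro k hk i hki
    have hkN0 : N0 ≤ k := le_trans (le_max_left _ _) hk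
    have h1 : 1 ≤ i - k := by omega
    have hmx := hmix k hkN0 (i - k) h1
    have hik : k + (i - k) = i := by omega
    rw [hik] at hmx
    filter_upwards [hmx] with ω hω
    simpa [hmean i, hCf, if_pos hki] using hω
  have hCL2 : ∀ k, K0 ≤ k → ∀ i, MemLp (Cf k i) 2 μ := by
    intro k hk i
    by_cases h : k < i
    · refine MemLp.of_bound (((hCmeas k i).mono (𝓕.le i)).aestronglyMeasurable)
        (f k * ∫ x, |U i x| ∂μ) ?_
      filter_upwards [hCbound k hk i h] with ω hω
      simpa [Real.norm_eq_abs] using hω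
    · simp only [hCf, if_neg h]
      exact hL2 i
  have hDmeas : ∀ k i, StronglyMeasurable[𝓕 i] (Df k i) :=
    fun k i => (hadapted i).stronglyMeasurable.sub (hCmeas k i)
  have hDL2 : ∀ k, K0 ≤ k → ∀ i, MemLp (Df k i) 2 μ :=
    fun k hk i => (hL2 i).sub (hCL2 k hk i)
  have hDvar : ∀ k, K0 ≤ k → ∀ i, ∫ ω, (Df k i ω)^2 ∂μ ≤ ∫ ω, (U i ω)^2 ∂μ := by
    intro k hk i
    by_cases h : k < i
    · have hc : MemLp (μ[U i|𝓕 (i - k)]) 2 μ := by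
        have := hCL2 k hk i
        simpa [hCf, if_pos h] using this
      have := sq_integral_sub_condexp_le (𝓕.le (i - k)) (hL2 i) hc
      have heq : ∀ ω, (Df k i ω)^2 = (U i ω - (μ[U i|𝓕 (i - k)]) ω)^2 := by
        intro ω; simp [hDf, hCf, if_pos h]
      rw [integral_congr_ae (Filter.Eventually.of_forall heq)]
      exact this
    · have heq : ∀ ω, (Df k i ω)^2 = 0 := by
        intro ω; simp [hDf, hCf, if_neg h]
      rw [integral_congr_ae (Filter.Eventually.of_forall heq)]
      simp only [integral_zero]
      exact integral_nonneg (fun ω => sq_nonneg _)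
  have hDcond : ∀ k, K0 ≤ k → ∀ j, μ[Df k (j + k)|𝓕 j] =ᵐ[μ] 0 := by
    intro k hk j
    have hk1 : 1 ≤ k := le_trans (le_max_right _ _) hk
    by_cases hj : 1 ≤ j
    · have hki : k < j + k := by omega
      have hjk : j + k - k = j := by omega
      have hCeq : Cf k (j+k) = μ[U (j+k)|𝓕 j] := by
        simp only [hCf, if_pos hki, hjk]
      have hsub : μ[Df k (j+k)|𝓕 j] =ᵐ[μ] μ[U (j+k)|𝓕 j] - μ[Cf k (j+k)|𝓕 j] := by
        have hDfun : Df k (j+k) = U (j+k) - Cf k (j+k) := rfl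
        rw [hDfun]
        exact condExp_sub (hUint _) (by rw [hCeq]; exact integrable_condExp) _
      have hproj : μ[Cf k (j+k)|𝓕 j] = Cf k (j+k) := by
        rw [hCeq]
        exact condExp_of_stronglyMeasurable (𝓕.le j) stronglyMeasurable_condExp
          integrable_condExp
      filter_upwards [hsub] with ω hω
      rw [hω, Pi.sub_apply, hproj, hCeq, sub_self]
      rfl
    · have hj0 : j = 0 := by omega
      subst hj0
      have hzero : Df k (0 + k) = 0 := by
        funext ω; simp [hDf, hCf]
      rw [hzero, condExp_zero]
  -- per-class convergence
  have hclass : ∀ k, K0 ≤ k → ∀ r, r < k →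
      ∀ᵐ ω ∂μ, Tendsto (fun J => (b (r + J*k))⁻¹
        * ∑ j ∈ Finset.range (J+1), Df k (r + j*k) ω) atTop (𝓝 0) := by
    intro k hk r hrk
    have hk1 : 1 ≤ k := le_trans (le_max_right _ _) hk
    set 𝓖 : Filtration ℕ m :=
      { seq := fun j => 𝓕 (r + j*k)
        mono' := fun i j hij => 𝓕.mono (Nat.add_le_add_left (Nat.mul_le_mul_right k hij) r)
        le' := fun j => 𝓕.le _ } with h𝓖
    set g : ℕ → Ω → ℝ := fun j ω => (b (r + j*k))⁻¹ * Df k (r + j*k) ω with hg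
    have hgadp : ∀ j, StronglyMeasurable[𝓖 j] (g j) :=
      fun j => (hDmeas k (r + j*k)).const_mul _
    have hgL2 : ∀ j, MemLp (g j) 2 μ :=
      fun j => (hDL2 k hk (r + j*k)).const_mul _
    have hgmds : ∀ j, μ[g (j+1)|𝓖 j] =ᵐ[μ] 0 := by
      intro j
      have hidx : r + (j+1)*k = (r + j*k) + k := by ring
      have h1 : g (j+1) = ((b (r + (j+1)*k))⁻¹ : ℝ) • (Df k ((r + j*k) + k)) := by
        funext ω
        simp only [hg, Pi.smul_apply, smul_eq_mul, hidx]
      rw [h1]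
      have h2 := condExp_smul (μ := μ) (m := 𝓖 j) ((b (r + (j+1)*k))⁻¹ : ℝ)
        (Df k ((r + j*k) + k))
      refine h2.trans ?_
      have h3 := hDcond k hk (r + j*k)
      filter_upwards [h3] with ω hω
      simp only [Pi.smul_apply, smul_eq_mul]
      rw [show (μ[Df k (r + j*k + k)|𝓖 j]) ω = (μ[Df k (r + j*k + k)|𝓕 (r + j*k)]) ω from rfl]
      rw [hω]
      simp
    have hC : ℝ := 0
    have hgsum : ∀ J, ∑ j ∈ Finset.range (J+1), ∫ ω, (g j ω)^2 ∂μ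
        ≤ ∑' n, (b n)⁻¹ ^ 2 * ∫ ω, (U n ω)^2 ∂μ := by
      intro J
      have hterm : ∀ j, ∫ ω, (g j ω)^2 ∂μ
          ≤ (b (r + j*k))⁻¹ ^ 2 * ∫ ω, (U (r + j*k) ω)^2 ∂μ := by
        intro j
        have hpt : ∀ ω, (g j ω)^2 = (b (r + j*k))⁻¹ ^ 2 * (Df k (r + j*k) ω)^2 := by
          intro ω; simp only [hg]; ring
        calc ∫ ω, (g j ω)^2 ∂μ
            = (b (r + j*k))⁻¹ ^ 2 * ∫ ω, (Df k (r + j*k) ω)^2 ∂μ := by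
              rw [integral_congr_ae (Filter.Eventually.of_forall hpt)]
              exact MeasureTheory.integral_const_mul _ _
          _ ≤ _ := mul_le_mul_of_nonneg_left (hDvar k hk _) (by positivity)
      have hinj : ∀ x ∈ Finset.range (J+1), ∀ y ∈ Finset.range (J+1),
          r + x*k = r + y*k → x = y := by
        intro j1 _ j2 _ he
        have : j1 * k = j2 * k := by omega
        exact Nat.eq_of_mul_eq_mul_right hk1 this
      calc ∑ j ∈ Finset.range (J+1), ∫ ω, (g j ω)^2 ∂μ
          ≤ ∑ j ∈ Finset.range (J+1), (b (r + j*k))⁻¹ ^ 2 * ∫ ω, (U (r + j*k) ω)^2 ∂μ :=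
            Finset.sum_le_sum (fun j _ => hterm j)
        _ = ∑ i ∈ (Finset.range (J+1)).image (fun j => r + j*k),
              (b i)⁻¹ ^ 2 * ∫ ω, (U i ω)^2 ∂μ :=
            (Finset.sum_image (f := fun i => (b i)⁻¹ ^ 2 * ∫ ω, (U i ω)^2 ∂μ) hinj).symm
        _ ≤ ∑' n, (b n)⁻¹ ^ 2 * ∫ ω, (U n ω)^2 ∂μ := by
            refine Summable.sum_le_tsum _ (fun i _ => ?_) hsum
            have : 0 ≤ ∫ ω, (U i ω)^2 ∂μ := integral_nonneg (fun ω => sq_nonneg _)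
            positivity
    have hmdsae := mds_ae_converges 𝓖 g hgadp hgL2 hgmds _ hgsum
    filter_upwards [hmdsae] with ω hω
    obtain ⟨c, hc⟩ := hω
    have hb'pos : ∀ j, 0 < b (r + j*k) := fun j => hbpos _
    have hb'mono : Monotone (fun j => b (r + j*k)) :=
      fun i j hij => hbmono (Nat.add_le_add_left (Nat.mul_le_mul_right k hij) r)
    have hb'top : Tendsto (fun j => b (r + j*k)) atTop atTop := by
      refine hbtop.comp (tendsto_atTop_mono (fun j => ?_) tendsto_id)
      calc (id j : ℕ) = j := rfl
        _ ≤ j * k := Nat.le_mul_of_pos_right j hk1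
        _ ≤ r + j * k := Nat.le_add_left _ _
    have hconv : Tendsto (fun J => ∑ j ∈ Finset.range (J+1),
        (Df k (r + j*k) ω) / (b (r + j*k))) atTop (𝓝 c) := by
      refine hc.congr (fun J => Finset.sum_congr rfl (fun j _ => ?_))
      rw [hg]
      rw [div_eq_inv_mul]
    exact kronecker_aux hb'pos hb'mono hb'top hconv
  -- a.e. events
  have hall : ∀ᵐ ω ∂μ, ∀ k, ∀ r, K0 ≤ k → r < k →
      Tendsto (fun J => (b (r + J*k))⁻¹
        * ∑ j ∈ Finset.range (J+1), Df k (r + j*k) ω) atTop (𝓝 0) := by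
    rw [ae_all_iff]
    intro k
    rw [ae_all_iff]
    intro r
    by_cases h : K0 ≤ k ∧ r < k
    · filter_upwards [hclass k h.1 r h.2] with ω hω _ _
      exact hω
    · filter_upwards with ω h1 h2
      exact absurd ⟨h1, h2⟩ h
  have hE1 : ∀ᵐ ω ∂μ, ∀ k, ∀ i, K0 ≤ k → k < i →
      |Cf k i ω| ≤ f k * ∫ x, |U i x| ∂μ := by
    rw [ae_all_iff]
    intro k
    rw [ae_all_iff]
    intro i
    by_cases h : K0 ≤ k ∧ k < i
    · filter_upwards [hCbound k h.1 i h.2] with ω hω _ _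
      exact hω
    · filter_upwards with ω h1 h2
      exact absurd ⟨h1, h2⟩ h
  filter_upwards [hall, hE1] with ω h2 h1
  have hE2 : ∀ k, K0 ≤ k → Tendsto
      (fun n => (b n)⁻¹ * ∑ i ∈ Finset.range (n+1), Df k i ω) atTop (𝓝 0) := by
    intro k hk
    have hk1 : 1 ≤ k := le_trans (le_max_right _ _) hk
    exact comb_residue hbpos hbmono hk1 (fun r hr => h2 k r hk hr)
  -- final epsilon argument
  rw [Metric.tendsto_atTop]
  intro ε hε
  have hfM : Tendsto (fun k => f k * M) atTop (𝓝 0) := by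
    simpa using hftend.mul_const M
  obtain ⟨k, hkK0, hkfM⟩ : ∃ k, K0 ≤ k ∧ f k * M < ε/3 := by
    obtain ⟨N, hN⟩ := Metric.tendsto_atTop.1 hfM (ε/3) (by linarith)
    refine ⟨max N K0, le_max_right _ _, ?_⟩
    have := hN (max N K0) (le_max_left _ _)
    rw [Real.dist_eq, sub_zero] at this
    exact lt_of_le_of_lt (le_abs_self _) this
  have hf0k : 0 ≤ f k := hf0 k (le_trans (le_max_left _ _) hkK0)
  set Kc := ∑ i ∈ Finset.range (k+1), |U i ω| with hKc
  have hKc0 : 0 ≤ Kc := Finset.sum_nonneg fun i _ => abs_nonneg _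
  have hCs : ∀ n, |(b n)⁻¹ * ∑ i ∈ Finset.range (n+1), Cf k i ω|
      ≤ (b n)⁻¹ * Kc + f k * M := by
    intro n
    have habs : |∑ i ∈ Finset.range (n+1), Cf k i ω|
        ≤ ∑ i ∈ Finset.range (n+1), |Cf k i ω| := Finset.abs_sum_le_sum_abs _ _
    have hsplit : ∑ i ∈ Finset.range (n+1), |Cf k i ω|
        = ∑ i ∈ (Finset.range (n+1)).filter (fun i => k < i), |Cf k i ω|
          + ∑ i ∈ (Finset.range (n+1)).filter (fun i => ¬ k < i), |Cf k i ω| :=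
      (Finset.sum_filter_add_sum_filter_not _ _ _).symm
    have hpart1 : ∑ i ∈ (Finset.range (n+1)).filter (fun i => k < i), |Cf k i ω|
        ≤ ∑ i ∈ Finset.range (n+1), f k * ∫ x, |U i x| ∂μ := by
      refine le_trans (Finset.sum_le_sum
        (fun i hi => h1 k i hkK0 (Finset.mem_filter.1 hi).2)) ?_
      refine Finset.sum_le_sum_of_subset_of_nonneg (Finset.filter_subset _ _)
        (fun i _ _ => ?_)
      have hia : 0 ≤ ∫ x, |U i x| ∂μ := integral_nonneg (fun x => abs_nonneg _)
      positivity
    have hpart2 : ∑ i ∈ (Finset.range (n+1)).filter (fun i => ¬ k < i), |Cf k i ω|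
        ≤ Kc := by
      have heq : ∀ i ∈ (Finset.range (n+1)).filter (fun i => ¬ k < i),
          |Cf k i ω| = |U i ω| := by
        intro i hi
        have := (Finset.mem_filter.1 hi).2
        simp [hCf, if_neg this]
      rw [Finset.sum_congr rfl heq, hKc]
      refine Finset.sum_le_sum_of_subset_of_nonneg ?_ (fun i _ _ => abs_nonneg _)
      intro i hi
      have hmem := Finset.mem_filter.1 hi
      have : ¬ k < i := hmem.2
      exact Finset.mem_range.2 (by omega)
    have hsum2 : ∑ i ∈ Finset.range (n+1), f k * ∫ x, |U i x| ∂μ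
        = f k * ∑ i ∈ Finset.range (n+1), ∫ x, |U i x| ∂μ := (Finset.mul_sum _ _ _).symm
    have hMn : (b n)⁻¹ * ∑ i ∈ Finset.range (n+1), ∫ x, |U i x| ∂μ ≤ M := hM n
    have hbninv : (0:ℝ) < (b n)⁻¹ := inv_pos.2 (hbpos n)
    have hstep : |∑ i ∈ Finset.range (n+1), Cf k i ω|
        ≤ Kc + f k * ∑ i ∈ Finset.range (n+1), ∫ x, |U i x| ∂μ := by
      rw [← hsum2]
      linarith
    calc |(b n)⁻¹ * ∑ i ∈ Finset.range (n+1), Cf k i ω|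
        = (b n)⁻¹ * |∑ i ∈ Finset.range (n+1), Cf k i ω| := by
          rw [abs_mul, abs_of_pos hbninv]
      _ ≤ (b n)⁻¹ * (Kc + f k * ∑ i ∈ Finset.range (n+1), ∫ x, |U i x| ∂μ) :=
          mul_le_mul_of_nonneg_left hstep hbninv.le
      _ = (b n)⁻¹ * Kc + f k * ((b n)⁻¹ * ∑ i ∈ Finset.range (n+1), ∫ x, |U i x| ∂μ) := by
          ring
      _ ≤ (b n)⁻¹ * Kc + f k * M := by
          exact (add_le_add_iff_left _).2 (mul_le_mul_of_nonneg_left hMn hf0k)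
  have hT := hE2 k hkK0
  have hbKc : Tendsto (fun n => (b n)⁻¹ * Kc) atTop (𝓝 0) := by
    simpa using (hbtop.inv_tendsto_atTop).mul_const Kc
  obtain ⟨N1, hN1⟩ := Metric.tendsto_atTop.1 hT (ε/3) (by linarith)
  obtain ⟨N2, hN2⟩ := Metric.tendsto_atTop.1 hbKc (ε/3) (by linarith)
  refine ⟨max N1 N2, fun n hn => ?_⟩
  have hT' := hN1 n (le_trans (le_max_left _ _) hn)
  have hb' := hN2 n (le_trans (le_max_right _ _) hn)
  rw [Real.dist_eq, sub_zero] at hT' hb'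
  rw [Real.dist_eq, sub_zero]
  have hdecomp : (b n)⁻¹ * ∑ i ∈ Finset.range (n+1), U i ω
      = (b n)⁻¹ * ∑ i ∈ Finset.range (n+1), Df k i ω
        + (b n)⁻¹ * ∑ i ∈ Finset.range (n+1), Cf k i ω := by
    rw [← mul_add, ← Finset.sum_add_distrib]
    congr 1
    refine Finset.sum_congr rfl (fun i _ => ?_)
    simp [hDf]
  rw [hdecomp]
  have h3 := hCs n
  have hbKcle : (b n)⁻¹ * Kc ≤ |(b n)⁻¹ * Kc| := le_abs_self _
  calc |(b n)⁻¹ * ∑ i ∈ Finset.range (n+1), Df k i ω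
        + (b n)⁻¹ * ∑ i ∈ Finset.range (n+1), Cf k i ω|
      ≤ |(b n)⁻¹ * ∑ i ∈ Finset.range (n+1), Df k i ω|
        + |(b n)⁻¹ * ∑ i ∈ Finset.range (n+1), Cf k i ω| := abs_add_le _ _
    _ < ε := by linarith
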